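/- In the MinBox(n, D, α, b) game with α < 1/(b+1) and D ≥ b(ln n + 1)/(1 − α(b+1)), if Maker always claims a free element from a free active box with maximal danger value, then at the end of the game every box F satisfies w_M(F) ≥ α|F|; that is, Maker wins. -/

import Mathlib

namespace MinBox

variable {α : Type*} [DecidableEq α]

/-- The box `i` is free: it still has an unclaimed element (w.r.t. Maker's set `M` and
Breaker's set `B`). -/
def Free {n : ℕ} (boxes : Fin n → Finset α) (M B : Finset α) (i : Fin n) : Prop :=
  (boxes i \ (M ∪ B)).Nonempty

/-- The box `i` is active: Maker owns fewer than `a·|Fᵢ|` of its elements. -/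
def Active {n : ℕ} (a : ℝ) (boxes : Fin n → Finset α) (M : Finset α) (i : Fin n) : Prop :=
  ((M ∩ boxes i).card : ℝ) < a * ((boxes i).card : ℝ)

/-- The danger value `danger(Fᵢ) = w_B(Fᵢ) − b·w_M(Fᵢ)` of the box `i`. -/
def danger {n : ℕ} (b : ℕ) (boxes : Fin n → Finset α) (M B : Finset α) (i : Fin n) : ℝ :=
  ((B ∩ boxes i).card : ℝ) - (b : ℝ) * ((M ∩ boxes i).card : ℝ)

end MinBox

/-- Auxiliary: the intersections of a set `S` with pairwise disjoint boxes have total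
size at most `|S|`. -/
lemma minBox_sum_inter_card_le {α ι : Type*} [DecidableEq α] (T : Finset ι) (f : ι → Finset α)
    (hd : ∀ i ∈ T, ∀ j ∈ T, i ≠ j → Disjoint (f i) (f j)) (S : Finset α) :
    ∑ i ∈ T, (S ∩ f i).card ≤ S.card := by
  rw [← Finset.card_biUnion (fun i hi j hj hij =>
    ((hd i hi j hj hij).mono Finset.inter_subset_right Finset.inter_subset_right))]
  exact Finset.card_le_card (Finset.biUnion_subset.2 fun i _ => Finset.inter_subset_left)

set_option maxHeartbeats 1000000 in
/-- In the `MinBox(n, D, a, b)` game with `a < 1/(b+1)` and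
`D ≥ b(ln n + 1)/(1 − a(b+1))`, if Maker always claims a free element from a free
active box of maximal danger, then at the end of the game (i.e. at any time at which
every element is claimed) every box `Fᵢ` satisfies `w_M(Fᵢ) ≥ a·|Fᵢ|`; that is, Maker
wins.  The play is modelled as in Statement 6. -/
theorem minBox_maker_wins {α : Type*} [DecidableEq α]
    (n D b : ℕ) (hn : 0 < n) (hD : 0 < D) (hb : 0 < b)
    (a : ℝ) (ha0 : 0 < a) (ha1 : a < 1 / ((b : ℝ) + 1))
    (hDsize : (b : ℝ) * (Real.log n + 1) / (1 - a * ((b : ℝ) + 1)) ≤ (D : ℝ))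
    (boxes : Fin n → Finset α)
    (hdisj : ∀ i j, i ≠ j → Disjoint (boxes i) (boxes j))
    (hsize : ∀ i, D ≤ (boxes i).card)
    (M B : ℕ → Finset α)
    (hM0 : M 0 = ∅) (hB0 : B 0 = ∅)
    (hMboard : ∀ t, ∀ x ∈ M t, ∃ i, x ∈ boxes i)
    (hBboard : ∀ t, ∀ x ∈ B t, ∃ i, x ∈ boxes i)
    (hMB : ∀ t, Disjoint (M t) (B t))
    (hBmono : ∀ t, B t ⊆ B (t + 1))
    (hBbias : ∀ t, (B (t + 1) \ B t).card ≤ b)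
    (hBnew : ∀ t, Disjoint (B (t + 1) \ B t) (M t))
    (hMakerMove : ∀ t,
      (∃ i, MinBox.Free boxes (M t) (B (t + 1)) i ∧ MinBox.Active a boxes (M t) i) →
      ∃ i x, MinBox.Free boxes (M t) (B (t + 1)) i ∧ MinBox.Active a boxes (M t) i ∧
        (∀ j, MinBox.Free boxes (M t) (B (t + 1)) j →
          MinBox.Active a boxes (M t) j →
          MinBox.danger b boxes (M t) (B (t + 1)) j ≤
            MinBox.danger b boxes (M t) (B (t + 1)) i) ∧
        x ∈ boxes i \ (M t ∪ B (t + 1)) ∧ M (t + 1) = insert x (M t))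
    (hMakerSkip : ∀ t,
      (¬ ∃ i, MinBox.Free boxes (M t) (B (t + 1)) i ∧ MinBox.Active a boxes (M t) i) →
      M (t + 1) = M t) :
    ∀ t, (∀ i, boxes i ⊆ M t ∪ B t) →
      ∀ i, a * ((boxes i).card : ℝ) ≤ ((M t ∩ boxes i).card : ℝ) := by
  classical
  -- Maker's set is monotone
  have hMmono : ∀ t, M t ⊆ M (t + 1) := by
    intro t
    by_cases h : ∃ i, MinBox.Free boxes (M t) (B (t + 1)) i ∧ MinBox.Active a boxes (M t) i
    · obtain ⟨i, x, -, -, -, -, hM1⟩ := hMakerMove t h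
      rw [hM1]; exact Finset.subset_insert _ _
    · rw [hMakerSkip t h]
  have hMle : ∀ {s t : ℕ}, s ≤ t → M s ⊆ M t := fun h => monotone_nat_of_le_succ hMmono h
  have hBle : ∀ {s t : ℕ}, s ≤ t → B s ⊆ B t := fun h => monotone_nat_of_le_succ hBmono h
  -- freeness and activity are antitone in time
  have hFree_anti : ∀ t i, MinBox.Free boxes (M (t + 1)) (B (t + 1 + 1)) i →
      MinBox.Free boxes (M t) (B (t + 1)) i := by
    rintro t i ⟨x, hx⟩
    rw [Finset.mem_sdiff] at hx
    refine ⟨x, Finset.mem_sdiff.2 ⟨hx.1, fun hx' => hx.2 ?_⟩⟩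
    rcases Finset.mem_union.1 hx' with h | h
    · exact Finset.mem_union_left _ (hMmono t h)
    · exact Finset.mem_union_right _ (hBmono (t + 1) h)
  have hAct_anti : ∀ t i, MinBox.Active a boxes (M (t + 1)) i →
      MinBox.Active a boxes (M t) i := by
    intro t i h
    refine lt_of_le_of_lt ?_ h
    exact_mod_cast Nat.cast_le.2
      (Finset.card_le_card (Finset.inter_subset_inter (hMmono t) le_rfl))
  -- the harmonic-type majorant G
  set G : ℕ → ℝ := fun k => (k : ℝ) * ∑ j ∈ Finset.Icc k n, ((j : ℝ))⁻¹ with hGdef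
  have hGone : ∀ k, 1 ≤ k → k ≤ n → (1 : ℝ) ≤ G k := by
    intro k hk1 hkn
    have hk0 : (0 : ℝ) < (k : ℝ) := by exact_mod_cast hk1
    calc (1 : ℝ) = (k : ℝ) * (k : ℝ)⁻¹ := (mul_inv_cancel₀ hk0.ne').symm
      _ ≤ G k := by
          refine mul_le_mul_of_nonneg_left ?_ hk0.le
          exact Finset.single_le_sum (f := fun j : ℕ => ((j : ℝ))⁻¹)
            (fun j _ => by positivity) (Finset.mem_Icc.2 ⟨le_rfl, hkn⟩)
  have hGrec : ∀ k, 1 ≤ k → k ≤ n → G k = 1 + (k : ℝ) / ((k : ℝ) + 1) * G (k + 1) := by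
    intro k hk1 hkn
    have h1 : Finset.Icc k n = insert k (Finset.Icc (k + 1) n) := by
      rw [Finset.Icc_add_one_left_eq_Ioc, Finset.Ioc_insert_left hkn]
    have hk0 : (k : ℝ) ≠ 0 := Nat.cast_ne_zero.2 (by omega)
    simp only [hGdef]
    rw [h1, Finset.sum_insert (by rw [Finset.Icc_add_one_left_eq_Ioc]; exact Finset.left_notMem_Ioc)]
    push_cast
    field_simp
  have hG1 : G 1 ≤ Real.log n + 1 := by
    have hGH : G 1 = ((harmonic n : ℚ) : ℝ) := by
      simp only [hGdef]
      rw [harmonic_eq_sum_Icc]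
      push_cast
      ring
    rw [hGH]
    have := harmonic_le_one_add_log n
    linarith
  -- The key invariant: at every Maker turn, a family of free active boxes has total
  -- danger at most b * G(size).
  have inv : ∀ t (T : Finset (Fin n)), T.Nonempty →
      (∀ i ∈ T, MinBox.Free boxes (M t) (B (t + 1)) i ∧ MinBox.Active a boxes (M t) i) →
      ∑ i ∈ T, MinBox.danger b boxes (M t) (B (t + 1)) i ≤ (b : ℝ) * G T.card := by
    intro t
    induction t with
    | zero =>
      intro T hTne hTfa
      have hk1 : 1 ≤ T.card := Finset.card_pos.2 hTne
      have hkn : T.card ≤ n := le_trans (Finset.card_le_univ T) (by simp)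
      have hcard : (1 : ℝ) ≤ G T.card := hGone _ hk1 hkn
      have h1 : ∀ i ∈ T, MinBox.danger b boxes (M 0) (B 1) i = ((B 1 ∩ boxes i).card : ℝ) := by
        intro i _
        simp [MinBox.danger, hM0]
      have hsum : ∑ i ∈ T, MinBox.danger b boxes (M 0) (B (0 + 1)) i ≤ (b : ℝ) := by
        rw [show (0 + 1) = 1 from rfl, Finset.sum_congr rfl h1]
        have h3 : ∑ i ∈ T, (B 1 ∩ boxes i).card ≤ b := by
          refine le_trans
            (minBox_sum_inter_card_le T boxes (fun i _ j _ hij => hdisj i j hij) (B 1)) ?_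
          have h4 := hBbias 0
          rwa [hB0, Finset.sdiff_empty] at h4
        calc ∑ i ∈ T, ((B 1 ∩ boxes i).card : ℝ)
            = ((∑ i ∈ T, (B 1 ∩ boxes i).card : ℕ) : ℝ) := by push_cast; rfl
          _ ≤ (b : ℝ) := by exact_mod_cast h3
      have hb0 : (0 : ℝ) ≤ (b : ℝ) := Nat.cast_nonneg b
      nlinarith [hsum, hcard, hb0]
    | succ t ih =>
      intro T hTne hTfa
      have hTfa' : ∀ i ∈ T, MinBox.Free boxes (M t) (B (t + 1)) i ∧
          MinBox.Active a boxes (M t) i :=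
        fun i hi => ⟨hFree_anti t i (hTfa i hi).1, hAct_anti t i (hTfa i hi).2⟩
      obtain ⟨i1, hi1⟩ := hTne
      obtain ⟨c, x, hcF, hcA, hmax, hxmem, hM1⟩ := hMakerMove t ⟨i1, hTfa' i1 hi1⟩
      rw [Finset.mem_sdiff, Finset.mem_union] at hxmem
      have hxc : x ∈ boxes c := hxmem.1
      have hxM : x ∉ M t := fun h => hxmem.2 (Or.inl h)
      -- per-element estimate
      have hkey : ∀ i ∈ T, MinBox.danger b boxes (M (t + 1)) (B (t + 1 + 1)) i ≤
          MinBox.danger b boxes (M t) (B (t + 1)) i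
            + (((B (t + 1 + 1) \ B (t + 1)) ∩ boxes i).card : ℝ)
            - (b : ℝ) * (if x ∈ boxes i then (1 : ℝ) else 0) := by
        intro i _
        have hB2 : ((B (t + 1 + 1) ∩ boxes i).card : ℝ) ≤ ((B (t + 1) ∩ boxes i).card : ℝ)
            + (((B (t + 1 + 1) \ B (t + 1)) ∩ boxes i).card : ℝ) := by
          have hsub : B (t + 1 + 1) ∩ boxes i ⊆
              (B (t + 1) ∩ boxes i) ∪ ((B (t + 1 + 1) \ B (t + 1)) ∩ boxes i) := by
            intro y hy
            rw [Finset.mem_inter] at hy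
            by_cases hyB : y ∈ B (t + 1)
            · exact Finset.mem_union_left _ (Finset.mem_inter.2 ⟨hyB, hy.2⟩)
            · exact Finset.mem_union_right _
                (Finset.mem_inter.2 ⟨Finset.mem_sdiff.2 ⟨hy.1, hyB⟩, hy.2⟩)
          calc ((B (t + 1 + 1) ∩ boxes i).card : ℝ)
              ≤ (((B (t + 1) ∩ boxes i) ∪ ((B (t + 1 + 1) \ B (t + 1)) ∩ boxes i)).card : ℝ) := by
                exact_mod_cast Finset.card_le_card hsub
            _ ≤ _ := by exact_mod_cast Finset.card_union_le _ _
        have hM2 : ((M (t + 1) ∩ boxes i).card : ℝ) =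
            ((M t ∩ boxes i).card : ℝ) + (if x ∈ boxes i then (1 : ℝ) else 0) := by
          rw [hM1]
          by_cases hxi : x ∈ boxes i
          · rw [if_pos hxi, Finset.insert_inter_of_mem hxi,
              Finset.card_insert_of_notMem (fun h => hxM (Finset.mem_inter.1 h).1)]
            push_cast
            ring
          · rw [if_neg hxi, Finset.insert_inter_of_notMem hxi, add_zero]
        simp only [MinBox.danger]
        have hbR : (0 : ℝ) ≤ (b : ℝ) := Nat.cast_nonneg b
        nlinarith [hB2, hM2, hbR]
      -- sum the per-element estimates
      have hsum1 : ∑ i ∈ T, MinBox.danger b boxes (M (t + 1)) (B (t + 1 + 1)) i ≤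
          (∑ i ∈ T, MinBox.danger b boxes (M t) (B (t + 1)) i) + (b : ℝ)
            - (b : ℝ) * (if c ∈ T then (1 : ℝ) else 0) := by
        have hs := Finset.sum_le_sum hkey
        rw [Finset.sum_sub_distrib, Finset.sum_add_distrib, ← Finset.mul_sum] at hs
        have hβ : ∑ i ∈ T, (((B (t + 1 + 1) \ B (t + 1)) ∩ boxes i).card : ℝ) ≤ (b : ℝ) := by
          have h5 := le_trans
            (minBox_sum_inter_card_le T boxes (fun i _ j _ hij => hdisj i j hij)
              (B (t + 1 + 1) \ B (t + 1))) (hBbias (t + 1))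
          calc ∑ i ∈ T, (((B (t + 1 + 1) \ B (t + 1)) ∩ boxes i).card : ℝ)
              = ((∑ i ∈ T, ((B (t + 1 + 1) \ B (t + 1)) ∩ boxes i).card : ℕ) : ℝ) := by
                push_cast; rfl
            _ ≤ (b : ℝ) := by exact_mod_cast h5
        have hind : (if c ∈ T then (1 : ℝ) else 0) ≤
            ∑ i ∈ T, (if x ∈ boxes i then (1 : ℝ) else 0) := by
          by_cases hc : c ∈ T
          · rw [if_pos hc]
            have h6 := Finset.single_le_sum (f := fun i : Fin n => if x ∈ boxes i then (1 : ℝ) else 0)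
              (fun i _ => by positivity) hc
            simpa [hxc] using h6
          · rw [if_neg hc]
            exact Finset.sum_nonneg fun i _ => by positivity
        have hbR : (0 : ℝ) ≤ (b : ℝ) := Nat.cast_nonneg b
        have := mul_le_mul_of_nonneg_left hind hbR
        linarith
      set k := T.card with hk
      have hk1 : 1 ≤ k := Finset.card_pos.2 ⟨i1, hi1⟩
      have hkn : k ≤ n := le_trans (Finset.card_le_univ T) (by simp)
      have hbR : (0 : ℝ) ≤ (b : ℝ) := Nat.cast_nonneg b
      by_cases hc : c ∈ T
      · have h0 := ih T ⟨i1, hi1⟩ hTfa'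
        rw [if_pos hc] at hsum1
        linarith
      · rw [if_neg hc] at hsum1
        have hTins : ∀ i ∈ insert c T, MinBox.Free boxes (M t) (B (t + 1)) i ∧
            MinBox.Active a boxes (M t) i := by
          intro i hi
          rcases Finset.mem_insert.1 hi with rfl | hi'
          · exact ⟨hcF, hcA⟩
          · exact hTfa' i hi'
        have h0 := ih (insert c T) (Finset.insert_nonempty c T) hTins
        rw [Finset.sum_insert hc, Finset.card_insert_of_notMem hc, ← hk] at h0
        have hmx : ∑ i ∈ T, MinBox.danger b boxes (M t) (B (t + 1)) i ≤
            (k : ℝ) * MinBox.danger b boxes (M t) (B (t + 1)) c := by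
          calc ∑ i ∈ T, MinBox.danger b boxes (M t) (B (t + 1)) i
              ≤ ∑ _i ∈ T, MinBox.danger b boxes (M t) (B (t + 1)) c :=
                Finset.sum_le_sum (fun i hi => hmax i (hTfa' i hi).1 (hTfa' i hi).2)
            _ = (k : ℝ) * MinBox.danger b boxes (M t) (B (t + 1)) c := by
                rw [Finset.sum_const, nsmul_eq_mul, hk]
        have hkpos : (0 : ℝ) < (k : ℝ) + 1 := by positivity
        have hknn : (0 : ℝ) ≤ (k : ℝ) := Nat.cast_nonneg k
        have hS : ((k : ℝ) + 1) * (∑ i ∈ T, MinBox.danger b boxes (M t) (B (t + 1)) i) ≤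
            (k : ℝ) * ((b : ℝ) * G (k + 1)) := by nlinarith [hmx, h0, hknn]
        have hdiv : ∑ i ∈ T, MinBox.danger b boxes (M t) (B (t + 1)) i ≤
            (k : ℝ) / ((k : ℝ) + 1) * ((b : ℝ) * G (k + 1)) := by
          rw [div_mul_eq_mul_div, le_div_iff₀ hkpos]
          linarith [hS]
        rw [hGrec k hk1 hkn]
        have hexp : (b : ℝ) * (1 + (k : ℝ) / ((k : ℝ) + 1) * G (k + 1)) =
            (b : ℝ) + (k : ℝ) / ((k : ℝ) + 1) * ((b : ℝ) * G (k + 1)) := by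
          ring
        rw [hexp]
        linarith [hsum1, hdiv]
  -- ### the endgame ###
  intro tEnd hfull i0
  by_contra hcon
  push_neg at hcon
  have hbR : (0 : ℝ) < (b : ℝ) := by exact_mod_cast hb
  have hDR : (0 : ℝ) < (D : ℝ) := by exact_mod_cast hD
  have hnR : (1 : ℝ) ≤ (n : ℝ) := by exact_mod_cast hn
  have hlogn : 0 ≤ Real.log n := Real.log_nonneg hnR
  have hb1pos : (0 : ℝ) < (b : ℝ) + 1 := by positivity
  have hden : 0 < 1 - a * ((b : ℝ) + 1) := by
    have := (lt_div_iff₀ hb1pos).1 ha1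
    linarith
  have hDlb : (b : ℝ) * (Real.log n + 1) ≤ (D : ℝ) * (1 - a * ((b : ℝ) + 1)) := by
    rw [div_le_iff₀ hden] at hDsize
    linarith
  have hbD : (b : ℝ) < (D : ℝ) := by
    nlinarith [hDlb, hlogn, hbR, hDR, ha0, hb1pos, mul_nonneg hbR.le hlogn,
      mul_pos hDR (mul_pos ha0 hb1pos)]
  have hbDnat : b < D := by exact_mod_cast hbD
  -- the box i0 is not free at the end
  have hnotfreeEnd : ¬ MinBox.Free boxes (M tEnd) (B (tEnd + 1)) i0 := by
    rintro ⟨x, hx⟩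
    rw [Finset.mem_sdiff] at hx
    rcases Finset.mem_union.1 (hfull i0 hx.1) with h | h
    · exact hx.2 (Finset.mem_union_left _ h)
    · exact hx.2 (Finset.mem_union_right _ (hBmono tEnd h))
  -- the box i0 is free at the start
  have hfree0 : MinBox.Free boxes (M 0) (B 1) i0 := by
    rw [MinBox.Free, hM0, Finset.empty_union]
    have h1 : (B 1).card ≤ b := by
      have h2 := hBbias 0; rwa [hB0, Finset.sdiff_empty] at h2
    have h3 := Finset.le_card_sdiff (B 1) (boxes i0)
    have h4 := hsize i0
    rw [← Finset.card_pos]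
    omega
  -- locate the last free turn t0
  have hexNF : ∃ t, ¬ MinBox.Free boxes (M t) (B (t + 1)) i0 := ⟨tEnd, hnotfreeEnd⟩
  have ht1spec := Nat.find_spec hexNF
  have ht1le : Nat.find hexNF ≤ tEnd := Nat.find_min' hexNF hnotfreeEnd
  have ht1pos : Nat.find hexNF ≠ 0 := by
    intro h
    rw [h] at ht1spec
    exact ht1spec hfree0
  obtain ⟨t0, ht0⟩ : ∃ t0, Nat.find hexNF = t0 + 1 := ⟨Nat.find hexNF - 1, by omega⟩
  have hfree_t0 : MinBox.Free boxes (M t0) (B (t0 + 1)) i0 := by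
    by_contra h
    exact Nat.find_min hexNF (by omega) h
  have hnotfree_t01 : ¬ MinBox.Free boxes (M (t0 + 1)) (B (t0 + 1 + 1)) i0 := ht0 ▸ ht1spec
  have ht0End : t0 + 1 ≤ tEnd := by omega
  clear ht0 ht1le ht1pos ht1spec hexNF hnotfreeEnd hfree0
  have hwM_mono : ∀ {t : ℕ}, t ≤ tEnd → ((M t ∩ boxes i0).card : ℝ) < a * ((boxes i0).card : ℝ) := by
    intro t ht
    refine lt_of_le_of_lt ?_ hcon
    exact_mod_cast Nat.cast_le.2 (Finset.card_le_card (Finset.inter_subset_inter (hMle ht) le_rfl))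
  have hAct_t0 : MinBox.Active a boxes (M t0) i0 := hwM_mono (by omega : t0 ≤ tEnd)
  obtain ⟨c, x, hcF, hcA, hmax, hxmem, hM1⟩ := hMakerMove t0 ⟨i0, hfree_t0, hAct_t0⟩
  rw [Finset.mem_sdiff, Finset.mem_union] at hxmem
  have hxc : x ∈ boxes c := hxmem.1
  have hxM : x ∉ M t0 := fun h => hxmem.2 (Or.inl h)
  -- the box i0 is fully claimed right after turn t0
  have hFsub : boxes i0 ⊆ M (t0 + 1) ∪ B (t0 + 1 + 1) := by
    rw [← Finset.sdiff_eq_empty_iff_subset]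
    exact Finset.not_nonempty_iff_eq_empty.1 hnotfree_t01
  have hdisjMB : Disjoint (M (t0 + 1)) (B (t0 + 1 + 1)) :=
    (hMB (t0 + 1 + 1)).mono_left (hMle (by omega))
  have hsplit : ((boxes i0).card : ℝ) =
      ((M (t0 + 1) ∩ boxes i0).card : ℝ) + ((B (t0 + 1 + 1) ∩ boxes i0).card : ℝ) := by
    have hU : (M (t0 + 1) ∩ boxes i0) ∪ (B (t0 + 1 + 1) ∩ boxes i0) = boxes i0 := by
      apply Finset.Subset.antisymm
      · exact Finset.union_subset Finset.inter_subset_right Finset.inter_subset_right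
      · intro y hy
        rcases Finset.mem_union.1 (hFsub hy) with h | h
        · exact Finset.mem_union_left _ (Finset.mem_inter.2 ⟨h, hy⟩)
        · exact Finset.mem_union_right _ (Finset.mem_inter.2 ⟨h, hy⟩)
    have hdd : Disjoint (M (t0 + 1) ∩ boxes i0) (B (t0 + 1 + 1) ∩ boxes i0) :=
      hdisjMB.mono Finset.inter_subset_left Finset.inter_subset_left
    have hcu := Finset.card_union_of_disjoint hdd
    rw [hU] at hcu
    exact_mod_cast congrArg (Nat.cast : ℕ → ℝ) hcu
  have hB2le : ((B (t0 + 1 + 1) ∩ boxes i0).card : ℝ) ≤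
      ((B (t0 + 1) ∩ boxes i0).card : ℝ) + (b : ℝ) := by
    have hsub : B (t0 + 1 + 1) ∩ boxes i0 ⊆
        (B (t0 + 1) ∩ boxes i0) ∪ ((B (t0 + 1 + 1) \ B (t0 + 1)) ∩ boxes i0) := by
      intro y hy
      rw [Finset.mem_inter] at hy
      by_cases hyB : y ∈ B (t0 + 1)
      · exact Finset.mem_union_left _ (Finset.mem_inter.2 ⟨hyB, hy.2⟩)
      · exact Finset.mem_union_right _
          (Finset.mem_inter.2 ⟨Finset.mem_sdiff.2 ⟨hy.1, hyB⟩, hy.2⟩)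
    have h1 : (B (t0 + 1 + 1) ∩ boxes i0).card ≤
        (B (t0 + 1) ∩ boxes i0).card + ((B (t0 + 1 + 1) \ B (t0 + 1)) ∩ boxes i0).card :=
      le_trans (Finset.card_le_card hsub) (Finset.card_union_le _ _)
    have h2 : ((B (t0 + 1 + 1) \ B (t0 + 1)) ∩ boxes i0).card ≤ b :=
      le_trans (Finset.card_le_card Finset.inter_subset_left) (hBbias (t0 + 1))
    have h3 : (B (t0 + 1 + 1) ∩ boxes i0).card ≤ (B (t0 + 1) ∩ boxes i0).card + b := by omega
    exact_mod_cast h3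
  have hM2 : ((M (t0 + 1) ∩ boxes i0).card : ℝ) =
      ((M t0 ∩ boxes i0).card : ℝ) + (if x ∈ boxes i0 then (1 : ℝ) else 0) := by
    rw [hM1]
    by_cases hxi : x ∈ boxes i0
    · rw [if_pos hxi, Finset.insert_inter_of_mem hxi,
        Finset.card_insert_of_notMem (fun h => hxM (Finset.mem_inter.1 h).1)]
      push_cast
      ring
    · rw [if_neg hxi, Finset.insert_inter_of_notMem hxi, add_zero]
  have hwM1 : ((M (t0 + 1) ∩ boxes i0).card : ℝ) < a * ((boxes i0).card : ℝ) :=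
    hwM_mono (by omega)
  have hFD : (D : ℝ) ≤ ((boxes i0).card : ℝ) := by exact_mod_cast hsize i0
  -- core numeric estimate
  have hcore : (b : ℝ) * (Real.log n + 1) <
      ((boxes i0).card : ℝ) - ((b : ℝ) + 1) * ((M (t0 + 1) ∩ boxes i0).card : ℝ) := by
    have e1 : ((b : ℝ) + 1) * ((M (t0 + 1) ∩ boxes i0).card : ℝ) <
        ((b : ℝ) + 1) * (a * ((boxes i0).card : ℝ)) :=
      mul_lt_mul_of_pos_left hwM1 hb1pos
    have e2 : (D : ℝ) * (1 - a * ((b : ℝ) + 1)) ≤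
        ((boxes i0).card : ℝ) * (1 - a * ((b : ℝ) + 1)) :=
      mul_le_mul_of_nonneg_right hFD hden.le
    have e3 : ((boxes i0).card : ℝ) * (1 - a * ((b : ℝ) + 1)) =
        ((boxes i0).card : ℝ) - ((b : ℝ) + 1) * (a * ((boxes i0).card : ℝ)) := by ring
    linarith [e1, e2, hDlb, e3]
  -- the danger of box i0 at turn t0
  have hd0eq : MinBox.danger b boxes (M t0) (B (t0 + 1)) i0 =
      ((B (t0 + 1) ∩ boxes i0).card : ℝ) - (b : ℝ) * ((M t0 ∩ boxes i0).card : ℝ) := rfl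
  by_cases hxi : x ∈ boxes i0
  · -- Maker claimed in box i0 at turn t0
    rw [if_pos hxi] at hM2
    have hd0_lb : (b : ℝ) * (Real.log n + 1) <
        MinBox.danger b boxes (M t0) (B (t0 + 1)) i0 := by
      rw [hd0eq]
      have e4 : (b : ℝ) * ((M t0 ∩ boxes i0).card : ℝ) =
          (b : ℝ) * ((M (t0 + 1) ∩ boxes i0).card : ℝ) - (b : ℝ) := by rw [hM2]; ring
      have e5 : ((b : ℝ) + 1) * ((M (t0 + 1) ∩ boxes i0).card : ℝ) =
          (b : ℝ) * ((M (t0 + 1) ∩ boxes i0).card : ℝ)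
            + ((M (t0 + 1) ∩ boxes i0).card : ℝ) := by ring
      linarith [hcore, hsplit, hB2le, e4, e5]
    have hinv1 := inv t0 {i0} ⟨i0, Finset.mem_singleton_self i0⟩ (by
      intro i hi
      rw [Finset.mem_singleton] at hi
      subst hi
      exact ⟨hfree_t0, hAct_t0⟩)
    rw [Finset.sum_singleton, Finset.card_singleton] at hinv1
    have := mul_le_mul_of_nonneg_left hG1 hbR.le
    linarith
  · -- Maker claimed in another box c at turn t0
    rw [if_neg hxi, add_zero] at hM2
    have hd0_lb : (b : ℝ) * Real.log n <
        MinBox.danger b boxes (M t0) (B (t0 + 1)) i0 := by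
      rw [hd0eq]
      have e4 : (b : ℝ) * ((M t0 ∩ boxes i0).card : ℝ) =
          (b : ℝ) * ((M (t0 + 1) ∩ boxes i0).card : ℝ) := by rw [hM2]
      have e5 : ((b : ℝ) + 1) * ((M (t0 + 1) ∩ boxes i0).card : ℝ) =
          (b : ℝ) * ((M (t0 + 1) ∩ boxes i0).card : ℝ)
            + ((M (t0 + 1) ∩ boxes i0).card : ℝ) := by ring
      linarith [hcore, hsplit, hB2le, e4, e5]
    have hcne : c ≠ i0 := by
      intro h
      rw [h] at hxc
      exact hxi hxc
    have hne : i0 ≠ c := fun h => hcne h.symm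
    have hinv2 := inv t0 {i0, c} ⟨i0, Finset.mem_insert_self i0 {c}⟩ (by
      intro i hi
      rcases Finset.mem_insert.1 hi with rfl | hi'
      · exact ⟨hfree_t0, hAct_t0⟩
      · rw [Finset.mem_singleton] at hi'
        subst hi'
        exact ⟨hcF, hcA⟩)
    rw [Finset.sum_pair hne, Finset.card_insert_of_notMem (by simpa using hne),
      Finset.card_singleton] at hinv2
    have hdc := hmax i0 hfree_t0 hAct_t0
    -- G 2 = 2 * (G 1 - 1)
    have hG2 : G 2 = 2 * (G 1 - 1) := by
      have := hGrec 1 le_rfl hn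
      push_cast at this
      norm_num at this
      linarith
    have hG2ub : (b : ℝ) * G 2 ≤ 2 * ((b : ℝ) * Real.log n) := by
      rw [hG2]
      nlinarith [hG1, hbR]
    linarith [hinv2, hdc, hd0_lb, hG2ub]
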